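/- Let 0 < t < 1 and let f, g, h be non-negative integrable functions on ℝⁿ satisfying h((1−t)x + t y) ≥ f(x)^{1−t} g(y)^t for all x, y ∈ ℝⁿ. Then ∫ h dx ≥ (∫ f dx)^{1−t} (∫ g dx)^t. -/

import Mathlib

open MeasureTheory

open Set Pointwise Filter
open scoped ENNReal NNReal

namespace PLAux

/-- Upper integral: infimum of lintegrals of measurable majorants. -/
noncomputable def upInt {α : Type*} [MeasurableSpace α] (μ : Measure α) (h : α → ℝ≥0∞) : ℝ≥0∞ :=
  ⨅ (ψ : α → ℝ≥0∞) (_ : Measurable ψ ∧ h ≤ ψ), ∫⁻ x, ψ x ∂μ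

theorem le_upInt {α : Type*} [MeasurableSpace α] {μ : Measure α} {h : α → ℝ≥0∞} {c : ℝ≥0∞}
    (H : ∀ ψ : α → ℝ≥0∞, Measurable ψ → h ≤ ψ → c ≤ ∫⁻ x, ψ x ∂μ) : c ≤ upInt μ h := by
  refine le_iInf fun ψ => le_iInf fun hψ => H ψ hψ.1 hψ.2

theorem upInt_le {α : Type*} [MeasurableSpace α] {μ : Measure α} {h ψ : α → ℝ≥0∞}
    (hψ : Measurable ψ) (hle : h ≤ ψ) : upInt μ h ≤ ∫⁻ x, ψ x ∂μ :=
  iInf_le_of_le ψ (iInf_le_of_le ⟨hψ, hle⟩ le_rfl)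

theorem upInt_le_lintegral {α : Type*} [MeasurableSpace α] {μ : Measure α} {h : α → ℝ≥0∞}
    (hh : AEMeasurable h μ) : upInt μ h ≤ ∫⁻ x, h x ∂μ := by
  classical
  set N : Set α := toMeasurable μ {x | h x ≠ hh.mk h x} with hN
  have hNmeas : MeasurableSet N := measurableSet_toMeasurable _ _
  have hNnull : μ N = 0 := by
    rw [hN, measure_toMeasurable]
    exact hh.ae_eq_mk
  set ψ : α → ℝ≥0∞ := fun x => if x ∈ N then ⊤ else hh.mk h x with hψdef
  have hψm : Measurable ψ := Measurable.ite hNmeas measurable_const hh.measurable_mk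
  have hle : h ≤ ψ := by
    intro x
    by_cases hx : x ∈ N
    · simp [hψdef, hx]
    · have : h x = hh.mk h x := by
        by_contra hc
        exact hx (subset_toMeasurable _ _ hc)
      simp [hψdef, hx, this]
  refine (upInt_le hψm hle).trans ?_
  have h1 : ψ =ᵐ[μ] hh.mk h := by
    filter_upwards [measure_eq_zero_iff_ae_notMem.mp hNnull] with x hx
    simp [hψdef, hx]
  rw [lintegral_congr_ae h1, ← lintegral_congr_ae hh.ae_eq_mk]

/-- product lintegral is at most the iterated lintegral (second coordinate outside),
for an arbitrary function. -/
theorem lintegral_prod_le_iterated {α β : Type*} [MeasurableSpace α] [MeasurableSpace β]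
    (μ : Measure α) (ν : Measure β) [SigmaFinite μ] [SigmaFinite ν] (f : α × β → ℝ≥0∞) :
    ∫⁻ p, f p ∂(μ.prod ν) ≤ ∫⁻ y, ∫⁻ x, f (x, y) ∂μ ∂ν := by
  rw [MeasureTheory.lintegral]
  refine iSup₂_le fun φ hφ => ?_
  rw [← SimpleFunc.lintegral_eq_lintegral,
    lintegral_prod_symm _ φ.measurable.aemeasurable]
  exact lintegral_mono fun y => lintegral_mono fun x => hφ (x, y)

/-- outer Tonelli for `upInt`. -/
theorem upInt_slice_le {α β : Type*} [MeasurableSpace α] [MeasurableSpace β]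
    (μ : Measure α) (ν : Measure β) [SigmaFinite μ] [SigmaFinite ν] (h : α × β → ℝ≥0∞) :
    upInt ν (fun y => upInt μ (fun x => h (x, y))) ≤ upInt (μ.prod ν) h := by
  refine le_upInt fun ψ hψm hle => ?_
  have hΨm : Measurable fun y => ∫⁻ x, ψ (x, y) ∂μ := by
    exact Measurable.lintegral_prod_left hψm
  refine (upInt_le hΨm ?_).trans ?_
  · intro y
    exact upInt_le (hψm.comp (measurable_id.prodMk measurable_const)) (fun x => hle (x, y))
  · rw [← lintegral_prod_symm _ hψm.aemeasurable]

/-- transfer of upInt along a measure-preserving measurable equivalence. -/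
theorem upInt_comp_equiv {α β : Type*} [MeasurableSpace α] [MeasurableSpace β]
    {μ : Measure α} {ν : Measure β} (e : α ≃ᵐ β) (he : MeasurePreserving e μ ν)
    (h : β → ℝ≥0∞) : upInt μ (fun x => h (e x)) = upInt ν h := by
  apply le_antisymm
  · refine le_upInt fun ψ hψm hle => ?_
    have : upInt μ (fun x => h (e x)) ≤ ∫⁻ x, ψ (e x) ∂μ :=
      upInt_le (hψm.comp e.measurable) (fun x => hle (e x))
    refine this.trans ?_
    rw [← lintegral_map_equiv ψ e, he.map_eq]
  · refine le_upInt fun ψ hψm hle => ?_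
    have hle' : h ≤ fun y => ψ (e.symm y) := by
      intro y
      have := hle (e.symm y)
      simpa using this
    have : upInt ν h ≤ ∫⁻ y, ψ (e.symm y) ∂ν := upInt_le (hψm.comp e.symm.measurable) hle'
    refine this.trans (le_of_eq ?_)
    rw [← he.map_eq, lintegral_map_equiv]
    simp

/-- lintegral transfer along measure preserving equivalence, arbitrary function. -/
theorem lintegral_comp_equiv {α β : Type*} [MeasurableSpace α] [MeasurableSpace β]
    {μ : Measure α} {ν : Measure β} (e : α ≃ᵐ β) (he : MeasurePreserving e μ ν)
    (h : β → ℝ≥0∞) : ∫⁻ x, h (e x) ∂μ = ∫⁻ y, h y ∂ν := by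
  rw [← lintegral_map_equiv h e, he.map_eq]
theorem volume_Ioi_lt (c : ℝ≥0∞) : volume {u : ℝ | 0 < u ∧ ENNReal.ofReal u < c} = c := by
  rcases eq_or_ne c ⊤ with rfl | hc
  · have h : {u : ℝ | 0 < u ∧ ENNReal.ofReal u < ⊤} = Ioi (0:ℝ) := by
      ext u; simp [mem_Ioi]
    rw [h]; simp
  · have h : {u : ℝ | 0 < u ∧ ENNReal.ofReal u < c} = Ioo (0:ℝ) c.toReal := by
      ext u
      simp only [mem_setOf_eq, mem_Ioo]
      constructor
      · rintro ⟨hu, hlt⟩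
        exact ⟨hu, (ENNReal.ofReal_lt_iff_lt_toReal hu.le hc).mp hlt⟩
      · rintro ⟨hu, hlt⟩
        exact ⟨hu, (ENNReal.ofReal_lt_iff_lt_toReal hu.le hc).mpr hlt⟩
    rw [h, Real.volume_Ioo, sub_zero, ENNReal.ofReal_toReal hc]

/-- ENNReal-valued layer cake formula. -/
theorem layercake {α : Type*} [MeasurableSpace α] (μ : Measure α) [SigmaFinite μ]
    {ψ : α → ℝ≥0∞} (hψ : Measurable ψ) :
    ∫⁻ x, ψ x ∂μ = ∫⁻ u in Ioi (0:ℝ), μ {x | ENNReal.ofReal u < ψ x} := by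
  set S : Set (ℝ × α) := {p : ℝ × α | 0 < p.1 ∧ ENNReal.ofReal p.1 < ψ p.2} with hS
  have hmeas : MeasurableSet S := by
    have e : S = {p : ℝ × α | 0 < p.1} ∩ {p : ℝ × α | ENNReal.ofReal p.1 < ψ p.2} := rfl
    rw [e]
    exact (measurable_fst measurableSet_Ioi).inter
      (measurableSet_lt (ENNReal.measurable_ofReal.comp measurable_fst) (hψ.comp measurable_snd))
  have swap := lintegral_lintegral_swap (μ := (volume : Measure ℝ)) (ν := μ)
    (f := fun u x => S.indicator 1 (u, x))
    (((measurable_indicator_const_iff 1).mpr hmeas).aemeasurable)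
  have step1 : ∫⁻ x, ψ x ∂μ = ∫⁻ x, ∫⁻ u, S.indicator 1 (u, x) ∂volume ∂μ := by
    refine lintegral_congr fun x => ?_
    have e : (fun u : ℝ => S.indicator 1 (u, x))
        = ({u : ℝ | 0 < u ∧ ENNReal.ofReal u < ψ x}).indicator (1 : ℝ → ℝ≥0∞) := by
      funext u
      by_cases hu : 0 < u ∧ ENNReal.ofReal u < ψ x
      · rw [indicator_of_mem (show (u,x) ∈ S from hu) (1 : ℝ × α → ℝ≥0∞),
          indicator_of_mem (show u ∈ {u : ℝ | 0 < u ∧ ENNReal.ofReal u < ψ x} from hu)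
            (1 : ℝ → ℝ≥0∞)]
        rfl
      · rw [indicator_of_notMem (show (u,x) ∉ S from hu) (1 : ℝ × α → ℝ≥0∞),
          indicator_of_notMem (show u ∉ {u : ℝ | 0 < u ∧ ENNReal.ofReal u < ψ x} from hu)
            (1 : ℝ → ℝ≥0∞)]
    rw [e, lintegral_indicator_one, volume_Ioi_lt]
    have e2 : {u : ℝ | 0 < u ∧ ENNReal.ofReal u < ψ x}
        = Ioi (0:ℝ) ∩ {u : ℝ | ENNReal.ofReal u < ψ x} := rfl
    rw [e2]
    exact measurableSet_Ioi.inter (measurableSet_lt ENNReal.measurable_ofReal measurable_const)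
  have step2 : ∀ u : ℝ, ∫⁻ x, S.indicator 1 (u, x) ∂μ
      = (Ioi (0:ℝ)).indicator (fun u => μ {x | ENNReal.ofReal u < ψ x}) u := by
    intro u
    by_cases hu : 0 < u
    · rw [indicator_of_mem (mem_Ioi.mpr hu)]
      have e : (fun x => S.indicator 1 (u, x))
          = ({x | ENNReal.ofReal u < ψ x}).indicator (1 : α → ℝ≥0∞) := by
        funext x
        by_cases hx : ENNReal.ofReal u < ψ x
        · rw [indicator_of_mem (show (u,x) ∈ S from ⟨hu, hx⟩) (1 : ℝ × α → ℝ≥0∞),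
            indicator_of_mem (show x ∈ {x | ENNReal.ofReal u < ψ x} from hx) (1 : α → ℝ≥0∞)]
          rfl
        · rw [indicator_of_notMem (show (u,x) ∉ S from fun hc => hx hc.2) (1 : ℝ × α → ℝ≥0∞),
            indicator_of_notMem (show x ∉ {x | ENNReal.ofReal u < ψ x} from hx) (1 : α → ℝ≥0∞)]
      rw [e, lintegral_indicator_one (measurableSet_lt measurable_const hψ)]
    · rw [indicator_of_notMem (fun hc => hu (mem_Ioi.mp hc))]
      have e : (fun x => S.indicator (1 : ℝ × α → ℝ≥0∞) (u, x)) = fun _ => 0 := by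
        funext x
        exact indicator_of_notMem (fun hc => hu hc.1) _
      rw [e, lintegral_zero]
  calc ∫⁻ x, ψ x ∂μ = ∫⁻ x, ∫⁻ u, S.indicator 1 (u, x) ∂volume ∂μ := step1
    _ = ∫⁻ u, ∫⁻ x, S.indicator 1 (u, x) ∂μ ∂volume := swap.symm
    _ = ∫⁻ u, (Ioi (0:ℝ)).indicator (fun u => μ {x | ENNReal.ofReal u < ψ x}) u ∂volume := by
        exact lintegral_congr step2
    _ = ∫⁻ u in Ioi (0:ℝ), μ {x | ENNReal.ofReal u < ψ x} := by
        rw [← lintegral_indicator measurableSet_Ioi]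

/-- compact one-dimensional Brunn–Minkowski. -/
theorem bm_compact {K L : Set ℝ} (hK : IsCompact K) (hL : IsCompact L)
    (neK : K.Nonempty) (neL : L.Nonempty) : volume K + volume L ≤ volume (K + L) := by
  set a := sSup K with ha
  set b := sInf L with hb
  have haK : a ∈ K := hK.sSup_mem neK
  have hbL : b ∈ L := hL.sInf_mem neL
  have h1 : (fun x => x + b) '' K ⊆ K + L := by
    rintro z ⟨x, hx, hz⟩
    exact ⟨x, hx, b, hbL, hz⟩
  have h2 : (fun y => a + y) '' L ⊆ K + L := by
    rintro z ⟨y, hy, hz⟩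
    exact ⟨a, haK, y, hy, hz⟩
  have hinter : ((fun x => x + b) '' K) ∩ ((fun y => a + y) '' L) ⊆ {a + b} := by
    rintro z ⟨⟨x, hx, hzx⟩, ⟨y, hy, hzy⟩⟩
    have hxa : x ≤ a := le_csSup hK.bddAbove hx
    have hby : b ≤ y := csInf_le hL.bddBelow hy
    have h3 : x + b = a + y := by
      have e1 : x + b = z := hzx
      have e2 : a + y = z := hzy
      rw [e1, e2]
    have hxea : x = a := by nlinarith
    have : z = a + b := by
      have e1 : x + b = z := hzx
      rw [← e1, hxea]
    simp [this]
  have hKb : volume ((fun x => x + b) '' K) = volume K := by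
    have e : (fun x => x + b) '' K = (fun x => x + (-b)) ⁻¹' K := by
      ext z
      constructor
      · rintro ⟨x, hx, rfl⟩; simpa using hx
      · intro hz; exact ⟨z - b, by simpa [sub_eq_add_neg] using hz, by ring⟩
    rw [e, (measurePreserving_add_right volume (-b)).measure_preimage
      hK.measurableSet.nullMeasurableSet]
  have haL : volume ((fun y => a + y) '' L) = volume L := by
    have e : (fun y => a + y) '' L = (fun y => (-a) + y) ⁻¹' L := by
      ext z
      constructor
      · rintro ⟨y, hy, rfl⟩; simpa using hy
      · intro hz
        exact ⟨-a + z, by simpa using hz, by ring⟩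
    rw [e, (measurePreserving_add_left volume (-a)).measure_preimage
      hL.measurableSet.nullMeasurableSet]
  calc volume K + volume L
      = volume ((fun x => x + b) '' K) + volume ((fun y => a + y) '' L) := by rw [hKb, haL]
    _ = volume (((fun x => x + b) '' K) ∪ ((fun y => a + y) '' L))
        + volume (((fun x => x + b) '' K) ∩ ((fun y => a + y) '' L)) :=
        (measure_union_add_inter _ ((hL.image (continuous_add_left a)).measurableSet)).symm
    _ ≤ volume (K + L) + 0 := by
        refine add_le_add (measure_mono (union_subset h1 h2)) ?_
        refine le_of_le_of_eq (measure_mono hinter) ?_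
        simp
    _ = volume (K + L) := by rw [add_zero]

/-- weighted AM-GM in ENNReal. -/
theorem ennreal_amgm {t : ℝ} (ht0 : 0 < t) (ht1 : t < 1) (a b : ℝ≥0∞) :
    a ^ (1 - t) * b ^ t ≤ ENNReal.ofReal (1 - t) * a + ENNReal.ofReal t * b := by
  have h1t : (0:ℝ) < 1 - t := by linarith
  have hof1 : ENNReal.ofReal (1 - t) ≠ 0 := by
    simp only [ne_eq, ENNReal.ofReal_eq_zero, not_le]; linarith
  have hoft : ENNReal.ofReal t ≠ 0 := by
    simp only [ne_eq, ENNReal.ofReal_eq_zero, not_le]; linarith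
  rcases eq_or_ne a ⊤ with rfl | ha
  · rcases eq_or_ne b 0 with rfl | hb
    · simp [ENNReal.zero_rpow_of_pos ht0]
    · have h1 : (⊤ : ℝ≥0∞) ^ (1 - t) = ⊤ := ENNReal.top_rpow_of_pos h1t
      have h2 : (0:ℝ≥0∞) < b ^ t := ENNReal.rpow_pos_of_nonneg (pos_iff_ne_zero.mpr hb) ht0.le
      rw [h1, ENNReal.top_mul h2.ne', ENNReal.mul_top hof1]
      exact le_top
  · rcases eq_or_ne b ⊤ with rfl | hb
    · rcases eq_or_ne a 0 with rfl | ha0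
      · simp [ENNReal.zero_rpow_of_pos h1t]
      · have h1 : (⊤ : ℝ≥0∞) ^ t = ⊤ := ENNReal.top_rpow_of_pos ht0
        have h2 : (0:ℝ≥0∞) < a ^ (1 - t) := ENNReal.rpow_pos_of_nonneg
          (pos_iff_ne_zero.mpr ha0) h1t.le
        rw [h1, ENNReal.mul_top h2.ne', ENNReal.mul_top hoft]
        exact le_top.trans (le_add_left le_rfl)
    · lift a to ℝ≥0 using ha
      lift b to ℝ≥0 using hb
      have key := NNReal.geom_mean_le_arith_mean2_weighted (Real.toNNReal (1-t))
        (Real.toNNReal t) a b (by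
          rw [← Real.toNNReal_add h1t.le ht0.le]
          simp)
      have c1 : ((Real.toNNReal (1-t)) : ℝ) = 1 - t := Real.coe_toNNReal _ h1t.le
      have c2 : ((Real.toNNReal t) : ℝ) = t := Real.coe_toNNReal _ ht0.le
      rw [c1, c2] at key
      have e1 : (a:ℝ≥0∞) ^ (1-t) * (b:ℝ≥0∞) ^ t
          = ((a ^ ((1:ℝ)-t) * b ^ (t:ℝ) : ℝ≥0) : ℝ≥0∞) := by
        rw [ENNReal.coe_mul, ENNReal.coe_rpow_of_nonneg _ h1t.le,
          ENNReal.coe_rpow_of_nonneg _ ht0.le]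
      have e2 : ((Real.toNNReal (1-t) * a + Real.toNNReal t * b : ℝ≥0) : ℝ≥0∞)
          = ENNReal.ofReal (1 - t) * a + ENNReal.ofReal t * b := by
        rw [ENNReal.coe_add, ENNReal.coe_mul, ENNReal.coe_mul]
        rfl
      rw [e1, ← e2]
      exact ENNReal.coe_le_coe.mpr key
/-- level set -/
def lev (φ : ℝ → ℝ≥0∞) (u : ℝ) : Set ℝ := {x | ENNReal.ofReal u < φ x}

/-- inner regularization of the measure of the level set -/
noncomputable def inReg (φ : ℝ → ℝ≥0∞) (u : ℝ) : ℝ≥0∞ :=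
  ⨆ (K : Set ℝ) (_ : IsCompact K ∧ K ⊆ lev φ u), volume K

/-- levels with a nonempty compact inside the level set -/
def Pset (φ : ℝ → ℝ≥0∞) : Set ℝ :=
  {u | 0 < u ∧ ∃ K : Set ℝ, K.Nonempty ∧ IsCompact K ∧ K ⊆ lev φ u}

theorem lev_mono (φ : ℝ → ℝ≥0∞) {u v : ℝ} (huv : u ≤ v) : lev φ v ⊆ lev φ u :=
  fun x hx => lt_of_le_of_lt (ENNReal.ofReal_le_ofReal huv) hx

theorem le_inReg {φ : ℝ → ℝ≥0∞} {u : ℝ} {K : Set ℝ} (hK : IsCompact K)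
    (hsub : K ⊆ lev φ u) : volume K ≤ inReg φ u :=
  le_iSup₂_of_le K ⟨hK, hsub⟩ le_rfl

theorem inReg_anti (φ : ℝ → ℝ≥0∞) : Antitone (inReg φ) := by
  intro u v huv
  exact iSup₂_le fun K hK => le_inReg hK.1 (hK.2.trans (lev_mono φ huv))

theorem inReg_measurable (φ : ℝ → ℝ≥0∞) : Measurable (inReg φ) :=
  (inReg_anti φ).measurable

theorem lintegral_le_inReg (φ : ℝ → ℝ≥0∞) :
    ∫⁻ x, φ x ≤ ∫⁻ u in Ioi (0:ℝ), inReg φ u := by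
  rw [MeasureTheory.lintegral]
  refine iSup₂_le fun φs hφs => ?_
  rw [← SimpleFunc.lintegral_eq_lintegral, layercake volume φs.measurable]
  refine lintegral_mono fun u => ?_
  have hA : MeasurableSet {x | ENNReal.ofReal u < φs x} :=
    measurableSet_lt measurable_const φs.measurable
  have hsub : {x | ENNReal.ofReal u < φs x} ⊆ lev φ u := fun x hx => lt_of_lt_of_le hx (hφs x)
  refine le_of_forall_lt fun r hr => ?_
  obtain ⟨K, hKsub, hKcpt, hrK⟩ := hA.exists_lt_isCompact hr
  exact lt_of_lt_of_le hrK (le_inReg hKcpt (hKsub.trans hsub))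

theorem Pset_down {φ : ℝ → ℝ≥0∞} {u u' : ℝ} (h0 : 0 < u') (hlt : u' ≤ u)
    (hu : u ∈ Pset φ) : u' ∈ Pset φ := by
  obtain ⟨-, K, hne, hcpt, hsub⟩ := hu
  exact ⟨h0, K, hne, hcpt, hsub.trans (lev_mono φ hlt)⟩

theorem inReg_zero {φ : ℝ → ℝ≥0∞} {u : ℝ} (h0 : 0 < u) (hu : u ∉ Pset φ) :
    inReg φ u = 0 := by
  refine le_antisymm (iSup₂_le fun K hK => ?_) (zero_le)
  rcases K.eq_empty_or_nonempty with rfl | hne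
  · simp
  · exact absurd ⟨h0, K, hne, hK.1, hK.2⟩ hu

theorem pos_mem_Pset {φ : ℝ → ℝ≥0∞} {u : ℝ} (h0 : 0 < u) (hpos : 0 < inReg φ u) :
    u ∈ Pset φ := by
  by_contra hc
  rw [inReg_zero h0 hc] at hpos
  exact lt_irrefl 0 hpos
theorem cov {W : ℝ → ℝ≥0∞} (hW : Measurable W) {c : ℝ} (hc : 0 < c) :
    ∫⁻ r in Ioo (0:ℝ) 1, W (c * r) = ENNReal.ofReal c⁻¹ * ∫⁻ u in Ioo 0 c, W u := by
  have hmap : Measure.map (fun r : ℝ => c * r) volume = ENNReal.ofReal |c⁻¹| • volume :=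
    Real.map_volume_mul_left hc.ne'
  have hind : (Ioo (0:ℝ) 1).indicator (fun r => W (c * r))
      = fun r => ((Ioo (0:ℝ) c).indicator W) (c * r) := by
    funext r
    by_cases hr : r ∈ Ioo (0:ℝ) 1
    · rw [indicator_of_mem hr]
      have : c * r ∈ Ioo (0:ℝ) c := by
        constructor
        · exact mul_pos hc hr.1
        · nlinarith [hr.2, hc]
      rw [indicator_of_mem this]
    · rw [indicator_of_notMem hr]
      have : c * r ∉ Ioo (0:ℝ) c := by
        intro hcr
        refine hr ⟨?_, ?_⟩
        · nlinarith [hcr.1, hc]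
        · nlinarith [hcr.2]
      rw [indicator_of_notMem this]
  calc ∫⁻ r in Ioo (0:ℝ) 1, W (c * r)
      = ∫⁻ r, (Ioo (0:ℝ) 1).indicator (fun r => W (c * r)) r := by
        rw [← lintegral_indicator measurableSet_Ioo]
    _ = ∫⁻ r, ((Ioo (0:ℝ) c).indicator W) (c * r) := by rw [hind]
    _ = ∫⁻ u, (Ioo (0:ℝ) c).indicator W u ∂(Measure.map (fun r : ℝ => c * r) volume) := by
        rw [lintegral_map (hW.indicator measurableSet_Ioo) (measurable_const_mul c)]
    _ = ENNReal.ofReal |c⁻¹| * ∫⁻ u, (Ioo (0:ℝ) c).indicator W u := by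
        rw [hmap, lintegral_smul_measure, smul_eq_mul]
    _ = ENNReal.ofReal c⁻¹ * ∫⁻ u in Ioo (0:ℝ) c, W u := by
        rw [abs_of_pos (inv_pos.mpr hc), lintegral_indicator measurableSet_Ioo]

theorem alg {c d t : ℝ} (hc : 0 < c) (hd : 0 < d) (ht0 : 0 < t) (ht1 : t < 1) (X Y : ℝ≥0∞) :
    ENNReal.ofReal (c ^ (1-t) * d ^ t)
      * ((ENNReal.ofReal c⁻¹ * X) ^ (1-t) * (ENNReal.ofReal d⁻¹ * Y) ^ t)
      = X ^ (1-t) * Y ^ t := by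
  have h1t : (0:ℝ) < 1 - t := by linarith
  have e1 : (ENNReal.ofReal c⁻¹ * X) ^ (1-t)
      = ENNReal.ofReal (c⁻¹ ^ (1-t)) * X ^ (1-t) := by
    rw [ENNReal.mul_rpow_of_nonneg _ _ h1t.le, ENNReal.ofReal_rpow_of_pos (inv_pos.mpr hc)]
  have e2 : (ENNReal.ofReal d⁻¹ * Y) ^ t = ENNReal.ofReal (d⁻¹ ^ t) * Y ^ t := by
    rw [ENNReal.mul_rpow_of_nonneg _ _ ht0.le, ENNReal.ofReal_rpow_of_pos (inv_pos.mpr hd)]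
  have hreal : c ^ (1-t) * d ^ t * (c⁻¹ ^ (1-t) * d⁻¹ ^ t) = 1 := by
    have a1 : c ^ (1-t) * c⁻¹ ^ (1-t) = 1 := by
      rw [← Real.mul_rpow hc.le (inv_pos.mpr hc).le, mul_inv_cancel₀ hc.ne', Real.one_rpow]
    have a2 : d ^ t * d⁻¹ ^ t = 1 := by
      rw [← Real.mul_rpow hd.le (inv_pos.mpr hd).le, mul_inv_cancel₀ hd.ne', Real.one_rpow]
    calc c ^ (1-t) * d ^ t * (c⁻¹ ^ (1-t) * d⁻¹ ^ t)
        = (c ^ (1-t) * c⁻¹ ^ (1-t)) * (d ^ t * d⁻¹ ^ t) := by ring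
      _ = 1 := by rw [a1, a2, one_mul]
  calc ENNReal.ofReal (c ^ (1-t) * d ^ t)
        * ((ENNReal.ofReal c⁻¹ * X) ^ (1-t) * (ENNReal.ofReal d⁻¹ * Y) ^ t)
      = (ENNReal.ofReal (c ^ (1-t) * d ^ t)
          * (ENNReal.ofReal (c⁻¹ ^ (1-t)) * ENNReal.ofReal (d⁻¹ ^ t))) * (X ^ (1-t) * Y ^ t) := by
        rw [e1, e2]; ring
    _ = ENNReal.ofReal (c ^ (1-t) * d ^ t * (c⁻¹ ^ (1-t) * d⁻¹ ^ t)) * (X ^ (1-t) * Y ^ t) := by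
        rw [← ENNReal.ofReal_mul (by positivity), ← ENNReal.ofReal_mul (by positivity)]
    _ = X ^ (1-t) * Y ^ t := by rw [hreal, ENNReal.ofReal_one, one_mul]
theorem vol_smul {a : ℝ} (ha : 0 < a) (K : Set ℝ) :
    volume (a • K) = ENNReal.ofReal a * volume K := by
  rw [Measure.addHaar_smul volume a K]
  congr 1
  rw [Module.finrank_self, pow_one, abs_of_pos ha]

theorem master {t : ℝ} (ht0 : 0 < t) (ht1 : t < 1) (f g : ℝ → ℝ≥0∞) {ψ : ℝ → ℝ≥0∞}
    (hψ : Measurable ψ)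
    (hyp : ∀ x y : ℝ, f x ^ (1 - t) * g y ^ t ≤ ψ ((1 - t) * x + t * y))
    {c d : ℝ} (hc : c ∈ Pset f) (hd : d ∈ Pset g) :
    (∫⁻ u in Ioo (0:ℝ) c, inReg f u) ^ (1 - t) * (∫⁻ u in Ioo (0:ℝ) d, inReg g u) ^ t
      ≤ ∫⁻ z, ψ z := by
  have h1t : (0:ℝ) < 1 - t := by linarith
  have hc0 : 0 < c := hc.1
  have hd0 : 0 < d := hd.1
  set l : ℝ := c ^ (1-t) * d ^ t with hl
  have hl0 : 0 < l := by positivity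
  set W : ℝ → ℝ≥0∞ := fun u => volume (lev ψ u) with hW
  have hWanti : Antitone W := fun u v huv => measure_mono (lev_mono ψ huv)
  have hWm : Measurable W := hWanti.measurable
  -- Step A: pointwise bound for r ∈ (0,1)
  have stepA : ∀ r ∈ Ioo (0:ℝ) 1,
      ENNReal.ofReal (1-t) * inReg f (c*r) + ENNReal.ofReal t * inReg g (d*r)
        ≤ W (l * r) := by
    rintro r ⟨hr0, hr1⟩
    have hcr : c * r ∈ Pset f := Pset_down (mul_pos hc0 hr0) (by nlinarith) hc
    have hdr : d * r ∈ Pset g := Pset_down (mul_pos hd0 hr0) (by nlinarith) hd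
    obtain ⟨-, K₀, hK₀ne, hK₀c, hK₀s⟩ := hcr
    obtain ⟨-, L₀, hL₀ne, hL₀c, hL₀s⟩ := hdr
    -- key bound for nonempty compacts
    have key : ∀ K L : Set ℝ, K.Nonempty → IsCompact K → K ⊆ lev f (c*r) →
        L.Nonempty → IsCompact L → L ⊆ lev g (d*r) →
        ENNReal.ofReal (1-t) * volume K + ENNReal.ofReal t * volume L ≤ W (l*r) := by
      intro K L hKne hKc hKs hLne hLc hLs
      have hsub : ((1-t) • K + t • L : Set ℝ) ⊆ lev ψ (l*r) := by
        rintro z ⟨x', ⟨x, hx, rfl⟩, y', ⟨y, hy, rfl⟩, rfl⟩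
        have hfx : ENNReal.ofReal (c*r) < f x := hKs hx
        have hgy : ENNReal.ofReal (d*r) < g y := hLs hy
        have hprod : ENNReal.ofReal (l*r) < f x ^ (1-t) * g y ^ t := by
          have hr1' : r ^ (1-t) * r ^ t = r := by
            rw [← Real.rpow_add hr0]; simp
          have lreal : (c*r) ^ (1-t) * ((d*r) ^ t) = l * r := by
            rw [Real.mul_rpow hc0.le hr0.le, Real.mul_rpow hd0.le hr0.le]
            calc c ^ (1-t) * r ^ (1-t) * (d ^ t * r ^ t)
                = (c ^ (1-t) * d ^ t) * (r ^ (1-t) * r ^ t) := by ring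
              _ = l * r := by rw [hr1', hl]
          have : ENNReal.ofReal (l*r)
              = ENNReal.ofReal (c*r) ^ (1-t) * ENNReal.ofReal (d*r) ^ t := by
            rw [← lreal, ENNReal.ofReal_mul (by positivity),
              ENNReal.ofReal_rpow_of_pos (mul_pos hc0 hr0),
              ENNReal.ofReal_rpow_of_pos (mul_pos hd0 hr0)]
          rw [this]
          exact ENNReal.mul_lt_mul (ENNReal.rpow_lt_rpow hfx h1t)
            (ENNReal.rpow_lt_rpow hgy ht0)
        have := hyp x y
        have hsm : (1-t) • x + t • y = (1-t) * x + t * y := rfl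
        exact lt_of_lt_of_le hprod (by rw [← hsm] at this; exact this)
      have hKc' : IsCompact ((1-t) • K) := hKc.smul _
      have hLc' : IsCompact (t • L) := hLc.smul _
      have bm := bm_compact hKc' hLc' (hKne.smul_set) (hLne.smul_set)
      calc ENNReal.ofReal (1-t) * volume K + ENNReal.ofReal t * volume L
          = volume ((1-t) • K) + volume (t • L) := by
            rw [vol_smul h1t K, vol_smul ht0 L]
        _ ≤ volume ((1-t) • K + t • L) := bm
        _ ≤ W (l*r) := measure_mono hsub
    -- now pass to suprema, patching with K₀, L₀
    have key' : ∀ (K : {K : Set ℝ // IsCompact K ∧ K ⊆ lev f (c*r)})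
        (L : {L : Set ℝ // IsCompact L ∧ L ⊆ lev g (d*r)}),
        ENNReal.ofReal (1-t) * volume (K:Set ℝ) + ENNReal.ofReal t * volume (L:Set ℝ)
          ≤ W (l*r) := by
      rintro ⟨K, hKc, hKs⟩ ⟨L, hLc, hLs⟩
      have h1 : ENNReal.ofReal (1-t) * volume K ≤ ENNReal.ofReal (1-t) * volume (K ∪ K₀) :=
        mul_le_mul_right (measure_mono subset_union_left) _
      have h2 : ENNReal.ofReal t * volume L ≤ ENNReal.ofReal t * volume (L ∪ L₀) :=
        mul_le_mul_right (measure_mono subset_union_left) _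
      refine (add_le_add h1 h2).trans ?_
      exact key (K ∪ K₀) (L ∪ L₀) (hK₀ne.inr) (hKc.union hK₀c) (union_subset hKs hK₀s)
        (hL₀ne.inr) (hLc.union hL₀c) (union_subset hLs hL₀s)
    have hne1 : Nonempty {K : Set ℝ // IsCompact K ∧ K ⊆ lev f (c*r)} := ⟨⟨K₀, hK₀c, hK₀s⟩⟩
    have hne2 : Nonempty {L : Set ℝ // IsCompact L ∧ L ⊆ lev g (d*r)} := ⟨⟨L₀, hL₀c, hL₀s⟩⟩
    have e1 : ENNReal.ofReal (1-t) * inReg f (c*r)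
        = ⨆ (K : {K : Set ℝ // IsCompact K ∧ K ⊆ lev f (c*r)}),
            ENNReal.ofReal (1-t) * volume (K:Set ℝ) := by
      rw [inReg, iSup_subtype', ENNReal.mul_iSup]
    have e2 : ENNReal.ofReal t * inReg g (d*r)
        = ⨆ (L : {L : Set ℝ // IsCompact L ∧ L ⊆ lev g (d*r)}),
            ENNReal.ofReal t * volume (L:Set ℝ) := by
      rw [inReg, iSup_subtype', ENNReal.mul_iSup]
    rw [e1, e2]
    exact ENNReal.iSup_add_iSup_le key'
  -- Step B/C/D : integrate over r and change variables
  have intA : ∫⁻ r in Ioo (0:ℝ) 1,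
      (ENNReal.ofReal (1-t) * inReg f (c*r) + ENNReal.ofReal t * inReg g (d*r))
        ≤ ∫⁻ r in Ioo (0:ℝ) 1, W (l * r) := by
    refine setLIntegral_mono (hWm.comp (measurable_const_mul l)) ?_
    exact fun r hr => stepA r hr
  have hIf : Measurable fun r => inReg f (c * r) :=
    (inReg_measurable f).comp (measurable_const_mul c)
  have hIg : Measurable fun r => inReg g (d * r) :=
    (inReg_measurable g).comp (measurable_const_mul d)
  have intB : ∫⁻ r in Ioo (0:ℝ) 1,
      (ENNReal.ofReal (1-t) * inReg f (c*r) + ENNReal.ofReal t * inReg g (d*r))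
      = ENNReal.ofReal (1-t) * (ENNReal.ofReal c⁻¹ * ∫⁻ u in Ioo (0:ℝ) c, inReg f u)
        + ENNReal.ofReal t * (ENNReal.ofReal d⁻¹ * ∫⁻ u in Ioo (0:ℝ) d, inReg g u) := by
    rw [lintegral_add_left (hIf.const_mul _), lintegral_const_mul _ hIf,
      lintegral_const_mul _ hIg, cov (inReg_measurable f) hc0, cov (inReg_measurable g) hd0]
  -- relate ∫⁻ψ with ∫_{Ioo 0 1} W (l r)
  have hψW : ENNReal.ofReal l * ∫⁻ r in Ioo (0:ℝ) 1, W (l * r) ≤ ∫⁻ z, ψ z := by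
    rw [cov hWm hl0, ← mul_assoc, ← ENNReal.ofReal_mul hl0.le, mul_inv_cancel₀ hl0.ne',
      ENNReal.ofReal_one, one_mul]
    rw [layercake volume hψ]
    exact lintegral_mono_set Ioo_subset_Ioi_self
  -- put everything together
  set X := ∫⁻ u in Ioo (0:ℝ) c, inReg f u with hX
  set Y := ∫⁻ u in Ioo (0:ℝ) d, inReg g u with hY
  calc X ^ (1-t) * Y ^ t
      = ENNReal.ofReal l * ((ENNReal.ofReal c⁻¹ * X) ^ (1-t) * (ENNReal.ofReal d⁻¹ * Y) ^ t) :=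
        (alg hc0 hd0 ht0 ht1 X Y).symm
    _ ≤ ENNReal.ofReal l * (ENNReal.ofReal (1-t) * (ENNReal.ofReal c⁻¹ * X)
          + ENNReal.ofReal t * (ENNReal.ofReal d⁻¹ * Y)) :=
        mul_le_mul_right (ennreal_amgm ht0 ht1 _ _) _
    _ = ENNReal.ofReal l * ∫⁻ r in Ioo (0:ℝ) 1,
          (ENNReal.ofReal (1-t) * inReg f (c*r) + ENNReal.ofReal t * inReg g (d*r)) := by
        rw [intB]
    _ ≤ ENNReal.ofReal l * ∫⁻ r in Ioo (0:ℝ) 1, W (l * r) := mul_le_mul_right intA _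
    _ ≤ ∫⁻ z, ψ z := hψW
theorem setlint_iUnion_mono {s : ℕ → Set ℝ} (hmono : Monotone s)
    (hmeas : ∀ n, MeasurableSet (s n)) {F : ℝ → ℝ≥0∞} (hF : Measurable F) :
    ∫⁻ u in ⋃ n, s n, F u = ⨆ n, ∫⁻ u in s n, F u := by
  rw [← lintegral_indicator (MeasurableSet.iUnion hmeas)]
  have hptw : (⋃ n, s n).indicator F = fun u => ⨆ n, (s n).indicator F u := by
    funext u
    by_cases hu : u ∈ ⋃ n, s n
    · rw [indicator_of_mem hu]
      obtain ⟨n, hn⟩ := mem_iUnion.mp hu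
      refine le_antisymm ?_ ?_
      · exact le_iSup_of_le n (by rw [indicator_of_mem hn])
      · refine iSup_le fun m => ?_
        by_cases hm : u ∈ s m
        · rw [indicator_of_mem hm]
        · rw [indicator_of_notMem hm]; exact zero_le
    · rw [indicator_of_notMem hu]
      symm
      rw [ENNReal.iSup_eq_zero]
      intro n
      exact indicator_of_notMem (fun hn => hu (mem_iUnion.mpr ⟨n, hn⟩)) F
  rw [hptw, lintegral_iSup (fun n => hF.indicator (hmeas n))
    (fun m n hmn => indicator_le_indicator_of_subset (hmono hmn) (fun _ => zero_le))]
  exact iSup_congr fun n => by rw [lintegral_indicator (hmeas n)]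

theorem seq_exists {φ : ℝ → ℝ≥0∞} (hne : (Pset φ).Nonempty) :
    ∃ cs : ℕ → ℝ, Monotone cs ∧ (∀ n, cs n ∈ Pset φ) ∧
      ({u : ℝ | 0 < u ∧ inReg φ u ≠ 0} \ ⋃ n, Ioo (0:ℝ) (cs n)).Subsingleton := by
  obtain ⟨c₀, hc₀⟩ := hne
  by_cases hB : BddAbove (Pset φ)
  · set M := sSup (Pset φ) with hM
    refine ⟨fun n => max c₀ (M - 1/(n+1)), ?_, ?_, ?_⟩
    · intro m n hmn
      refine max_le_max le_rfl (sub_le_sub_left ?_ M)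
      apply one_div_le_one_div_of_le
      · positivity
      · have : (m:ℝ) ≤ n := Nat.cast_le.mpr hmn
        linarith
    · intro n
      show max c₀ (M - 1/(n+1)) ∈ Pset φ
      rcases le_or_gt (M - 1/(n+1)) c₀ with hle | hlt
      · rw [max_eq_left hle]; exact hc₀
      · rw [max_eq_right hlt.le]
        have hx0 : 0 < M - 1/(n+1) := lt_trans hc₀.1 hlt
        have hxM : M - 1/(n+1) < M := by
          have : (0:ℝ) < 1/(n+1) := by positivity
          linarith
        obtain ⟨p, hp, hxp⟩ := exists_lt_of_lt_csSup ⟨c₀, hc₀⟩ hxM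
        exact Pset_down hx0 hxp.le hp
    · intro u hu v hv
      have key : ∀ w, w ∈ ({u : ℝ | 0 < u ∧ inReg φ u ≠ 0} \ ⋃ (n : ℕ), Ioo (0:ℝ)
          (max c₀ (M - 1/((n:ℝ)+1)))) → w = M := by
        rintro w ⟨⟨hw0, hwne⟩, hwU⟩
        have hwP : w ∈ Pset φ := pos_mem_Pset hw0 (pos_iff_ne_zero.mpr hwne)
        have hwM : w ≤ M := le_csSup hB hwP
        have hlow : ∀ n : ℕ, M - 1/(n+1) ≤ w := by
          intro n
          have : w ∉ Ioo (0:ℝ) (max c₀ (M - 1/(n+1))) :=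
            fun hc => hwU (mem_iUnion.mpr ⟨n, hc⟩)
          have h2 : ¬ w < max c₀ (M - 1/(n+1)) := fun hlt => this ⟨hw0, hlt⟩
          push_neg at h2
          exact le_trans (le_max_right _ _) h2
        have : M ≤ w := by
          refine le_of_forall_pos_le_add fun ε hε => ?_
          obtain ⟨n, hn⟩ := exists_nat_one_div_lt hε
          have := hlow n
          have hcast : (1:ℝ)/(n+1) < ε := by exact_mod_cast hn
          linarith
        linarith [hwM, this]
      rw [key u hu, key v hv]
  · refine ⟨fun n => max c₀ n, ?_, ?_, ?_⟩
    · intro m n hmn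
      exact max_le_max le_rfl (Nat.cast_le.mpr hmn)
    · intro n
      show max c₀ (n:ℝ) ∈ Pset φ
      rcases le_or_gt (n:ℝ) c₀ with hle | hlt
      · rw [max_eq_left hle]; exact hc₀
      · rw [max_eq_right hlt.le]
        obtain ⟨p, hp, hxp⟩ : ∃ p ∈ Pset φ, (n:ℝ) < p := by
          rw [not_bddAbove_iff] at hB
          obtain ⟨p, hp, hnp⟩ := hB n
          exact ⟨p, hp, hnp⟩
        exact Pset_down (lt_trans hc₀.1 hlt) hxp.le hp
    · intro u hu v hv
      exfalso
      obtain ⟨⟨hw0, hwne⟩, hwU⟩ := hu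
      obtain ⟨n, hn⟩ := exists_nat_gt u
      refine hwU (mem_iUnion.mpr ⟨n, ⟨hw0, ?_⟩⟩)
      exact lt_of_lt_of_le hn (le_max_right _ _)

/-- the one-dimensional Prékopa–Leindler inequality, upper-integral form,
with no measurability assumptions. -/
theorem dim1 {t : ℝ} (ht0 : 0 < t) (ht1 : t < 1) (f g h : ℝ → ℝ≥0∞)
    (hyp : ∀ x y : ℝ, f x ^ (1 - t) * g y ^ t ≤ h ((1 - t) * x + t * y)) :
    (∫⁻ x, f x) ^ (1 - t) * (∫⁻ x, g x) ^ t ≤ upInt volume h := by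
  have h1t : (0:ℝ) < 1 - t := by linarith
  refine le_upInt fun ψ hψm hle => ?_
  have hyp' : ∀ x y : ℝ, f x ^ (1 - t) * g y ^ t ≤ ψ ((1 - t) * x + t * y) :=
    fun x y => (hyp x y).trans (hle _)
  set A := ∫⁻ x, f x with hA
  set B := ∫⁻ x, g x with hB
  -- trivial cases
  rcases eq_or_ne A 0 with hA0 | hApos
  · rw [hA0, ENNReal.zero_rpow_of_pos h1t, zero_mul]; exact zero_le
  rcases eq_or_ne B 0 with hB0 | hBpos
  · rw [hB0, ENNReal.zero_rpow_of_pos ht0, mul_zero]; exact zero_le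
  -- Pset f and Pset g are nonempty
  have hPf : (Pset f).Nonempty := by
    by_contra hc
    rw [not_nonempty_iff_eq_empty] at hc
    have : ∫⁻ u in Ioi (0:ℝ), inReg f u = 0 := by
      have : ∀ u ∈ Ioi (0:ℝ), inReg f u = 0 :=
        fun u hu => inReg_zero hu (by rw [hc]; exact notMem_empty u)
      calc ∫⁻ u in Ioi (0:ℝ), inReg f u = ∫⁻ _ in Ioi (0:ℝ), 0 :=
            setLIntegral_congr_fun measurableSet_Ioi this
        _ = 0 := by simp
    exact hApos (le_antisymm (le_trans (lintegral_le_inReg f) this.le) (zero_le))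
  have hPg : (Pset g).Nonempty := by
    by_contra hc
    rw [not_nonempty_iff_eq_empty] at hc
    have : ∫⁻ u in Ioi (0:ℝ), inReg g u = 0 := by
      have : ∀ u ∈ Ioi (0:ℝ), inReg g u = 0 :=
        fun u hu => inReg_zero hu (by rw [hc]; exact notMem_empty u)
      calc ∫⁻ u in Ioi (0:ℝ), inReg g u = ∫⁻ _ in Ioi (0:ℝ), 0 :=
            setLIntegral_congr_fun measurableSet_Ioi this
        _ = 0 := by simp
    exact hBpos (le_antisymm (le_trans (lintegral_le_inReg g) this.le) (zero_le))
  obtain ⟨cs, hcsm, hcsP, hcss⟩ := seq_exists hPf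
  obtain ⟨ds, hdsm, hdsP, hdss⟩ := seq_exists hPg
  -- A is at most the sup of the truncated integrals
  have truncate : ∀ (φ : ℝ → ℝ≥0∞) (es : ℕ → ℝ), Monotone es →
      ({u : ℝ | 0 < u ∧ inReg φ u ≠ 0} \ ⋃ n, Ioo (0:ℝ) (es n)).Subsingleton →
      (∫⁻ x, φ x) ≤ ⨆ n, ∫⁻ u in Ioo (0:ℝ) (es n), inReg φ u := by
    intro φ es hesm hess
    refine (lintegral_le_inReg φ).trans ?_
    set U := ⋃ n, Ioo (0:ℝ) (es n) with hU
    have hUm : MeasurableSet U := MeasurableSet.iUnion fun n => measurableSet_Ioo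
    have hUsub : U ⊆ Ioi (0:ℝ) := iUnion_subset fun n => Ioo_subset_Ioi_self
    have hsplit := lintegral_union (μ := volume) (f := inReg φ) (A := U)
      (B := Ioi (0:ℝ) \ U) (measurableSet_Ioi.diff hUm) disjoint_sdiff_right
    rw [union_diff_cancel hUsub] at hsplit
    have hzero : ∫⁻ u in Ioi (0:ℝ) \ U, inReg φ u = 0 := by
      rw [lintegral_eq_zero_iff (inReg_measurable φ), Filter.EventuallyEq, ae_iff,
        Measure.restrict_apply' (measurableSet_Ioi.diff hUm)]
      have hsub2 : {u : ℝ | ¬ inReg φ u = (0 : ℝ → ℝ≥0∞) u} ∩ (Ioi (0:ℝ) \ U)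
          ⊆ {u : ℝ | 0 < u ∧ inReg φ u ≠ 0} \ U := by
        rintro u ⟨hu1, hu2, hu3⟩
        exact ⟨⟨hu2, hu1⟩, hu3⟩
      refine le_antisymm ?_ (zero_le)
      calc volume ({u : ℝ | ¬ inReg φ u = (0 : ℝ → ℝ≥0∞) u} ∩ (Ioi (0:ℝ) \ U))
          ≤ volume ({u : ℝ | 0 < u ∧ inReg φ u ≠ 0} \ U) := measure_mono hsub2
        _ = 0 := hess.measure_zero volume
    have hunion : ∫⁻ u in U, inReg φ u = ⨆ n, ∫⁻ u in Ioo (0:ℝ) (es n), inReg φ u :=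
      setlint_iUnion_mono (fun m n hmn => Ioo_subset_Ioo_right (hesm hmn))
        (fun n => measurableSet_Ioo) (inReg_measurable φ)
    rw [hsplit, hzero]
    simpa using hunion.le
  set X : ℕ → ℝ≥0∞ := fun n => ∫⁻ u in Ioo (0:ℝ) (cs n), inReg f u with hX
  set Y : ℕ → ℝ≥0∞ := fun n => ∫⁻ u in Ioo (0:ℝ) (ds n), inReg g u with hY
  have keyA : A ≤ ⨆ n, X n := truncate f cs hcsm hcss
  have keyB : B ≤ ⨆ n, Y n := truncate g ds hdsm hdss
  have hXmono : Monotone X := fun m n hmn =>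
    lintegral_mono_set (Ioo_subset_Ioo_right (hcsm hmn))
  have hYmono : Monotone Y := fun m n hmn =>
    lintegral_mono_set (Ioo_subset_Ioo_right (hdsm hmn))
  have hbound : ∀ n, X n ^ (1-t) * Y n ^ t ≤ ∫⁻ z, ψ z :=
    fun n => master ht0 ht1 f g hψm hyp' (hcsP n) (hdsP n)
  set XX := ⨆ n, X n with hXX
  set YY := ⨆ n, Y n with hYY
  have hXX0 : XX ≠ 0 := by
    intro h0
    exact hApos (le_antisymm (keyA.trans h0.le) (zero_le))
  have hYY0 : YY ≠ 0 := by
    intro h0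
    exact hBpos (le_antisymm (keyB.trans h0.le) (zero_le))
  have hXt : Filter.Tendsto X Filter.atTop (nhds XX) := tendsto_atTop_iSup hXmono
  have hYt : Filter.Tendsto Y Filter.atTop (nhds YY) := tendsto_atTop_iSup hYmono
  have hXrt : Filter.Tendsto (fun n => X n ^ (1-t)) Filter.atTop (nhds (XX ^ (1-t))) :=
    (ENNReal.continuous_rpow_const.tendsto XX).comp hXt
  have hYrt : Filter.Tendsto (fun n => Y n ^ t) Filter.atTop (nhds (YY ^ t)) :=
    (ENNReal.continuous_rpow_const.tendsto YY).comp hYt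
  have hXXr0 : XX ^ (1-t) ≠ 0 :=
    (ENNReal.rpow_pos_of_nonneg (pos_iff_ne_zero.mpr hXX0) h1t.le).ne'
  have hYYr0 : YY ^ t ≠ 0 :=
    (ENNReal.rpow_pos_of_nonneg (pos_iff_ne_zero.mpr hYY0) ht0.le).ne'
  have hzt : Filter.Tendsto (fun n => X n ^ (1-t) * Y n ^ t) Filter.atTop
      (nhds (XX ^ (1-t) * YY ^ t)) :=
    ENNReal.Tendsto.mul hXrt (Or.inl hXXr0) hYrt (Or.inl hYYr0)
  have final : XX ^ (1-t) * YY ^ t ≤ ∫⁻ z, ψ z :=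
    le_of_tendsto hzt (Filter.Eventually.of_forall hbound)
  calc A ^ (1-t) * B ^ t ≤ XX ^ (1-t) * YY ^ t :=
        mul_le_mul' (ENNReal.rpow_le_rpow keyA h1t.le) (ENNReal.rpow_le_rpow keyB ht0.le)
    _ ≤ ∫⁻ z, ψ z := final
theorem PLpi {t : ℝ} (ht0 : 0 < t) (ht1 : t < 1) :
    ∀ (n : ℕ) (f g h : (Fin n → ℝ) → ℝ≥0∞),
      (∀ x y, f x ^ (1 - t) * g y ^ t ≤ h ((1 - t) • x + t • y)) →
      (∫⁻ x, f x) ^ (1 - t) * (∫⁻ x, g x) ^ t ≤ upInt volume h := by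
  have h1t : (0:ℝ) < 1 - t := by linarith
  intro n
  induction n with
  | zero =>
    intro f g h hyp
    set x₀ : Fin 0 → ℝ := fun i => isEmptyElim i with hx₀
    have hvol : (volume : Measure (Fin 0 → ℝ)) = Measure.dirac x₀ := by
      rw [volume_pi, Measure.pi_of_empty]
    have hlf : ∫⁻ x, f x = f x₀ := by rw [hvol, lintegral_dirac' x₀ Subsingleton.measurable]
    have hlg : ∫⁻ x, g x = g x₀ := by rw [hvol, lintegral_dirac' x₀ Subsingleton.measurable]
    rw [hlf, hlg]
    refine le_upInt fun ψ hψm hle => ?_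
    have : ∫⁻ x, ψ x = ψ x₀ := by rw [hvol, lintegral_dirac' x₀ hψm]
    rw [this]
    refine le_trans ?_ (hle x₀)
    have := hyp x₀ x₀
    rwa [Subsingleton.elim ((1-t) • x₀ + t • x₀) x₀] at this
  | succ n ih =>
    intro f g h hyp
    set e := MeasurableEquiv.piFinSuccAbove (fun _ : Fin (n+1) => ℝ) 0 with he
    have hep' := measurePreserving_piFinSuccAbove (fun _ : Fin (n+1) => (volume : Measure ℝ)) 0
    have hpi1 : Measure.pi (fun _ : Fin (n+1) => (volume : Measure ℝ))
        = (volume : Measure (Fin (n+1) → ℝ)) := volume_pi.symm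
    have hpi2 : Measure.pi (fun _ : Fin n => (volume : Measure ℝ))
        = (volume : Measure (Fin n → ℝ)) := volume_pi.symm
    rw [hpi1] at hep'
    have hep : MeasurePreserving e volume
        ((volume : Measure ℝ).prod (volume : Measure (Fin n → ℝ))) := by
      rw [← hpi2]
      exact hep'
    have helin : ∀ (a b : ℝ) (x y : Fin (n+1) → ℝ), e (a • x + b • y) = a • e x + b • e y :=
      fun a b x y => rfl
    have hsymmlin : ∀ (a b : ℝ) (p q : ℝ × (Fin n → ℝ)),
        e.symm (a • p + b • q) = a • e.symm p + b • e.symm q := by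
      intro a b p q
      apply e.injective
      rw [helin, e.apply_symm_apply, e.apply_symm_apply, e.apply_symm_apply]
    set f' : ℝ × (Fin n → ℝ) → ℝ≥0∞ := fun p => f (e.symm p) with hf'
    set g' : ℝ × (Fin n → ℝ) → ℝ≥0∞ := fun p => g (e.symm p) with hg'
    set h' : ℝ × (Fin n → ℝ) → ℝ≥0∞ := fun p => h (e.symm p) with hh'
    have hyp' : ∀ p q, f' p ^ (1-t) * g' q ^ t ≤ h' ((1-t) • p + t • q) := by
      intro p q
      show f (e.symm p) ^ (1-t) * g (e.symm q) ^ t ≤ h (e.symm ((1-t) • p + t • q))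
      rw [hsymmlin]
      exact hyp (e.symm p) (e.symm q)
    set F : (Fin n → ℝ) → ℝ≥0∞ := fun x' => ∫⁻ z, f' (z, x') ∂(volume : Measure ℝ) with hF
    set G : (Fin n → ℝ) → ℝ≥0∞ := fun y' => ∫⁻ z, g' (z, y') ∂(volume : Measure ℝ) with hG
    set H : (Fin n → ℝ) → ℝ≥0∞ := fun x' => upInt volume (fun z => h' (z, x')) with hH
    have hFGH : ∀ x' y', F x' ^ (1-t) * G y' ^ t ≤ H ((1-t) • x' + t • y') := by
      intro x' y'
      refine dim1 ht0 ht1 (fun z => f' (z, x')) (fun z => g' (z, y'))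
        (fun z => h' (z, (1-t) • x' + t • y')) ?_
      intro a b
      have hpr : ((1-t) • ((a, x') : ℝ × (Fin n → ℝ)) + t • ((b, y') : ℝ × (Fin n → ℝ)))
          = ((1-t) * a + t * b, (1-t) • x' + t • y') := rfl
      have := hyp' (a, x') (b, y')
      rwa [hpr] at this
    have hmain := ih F G H hFGH
    -- chain inequalities
    have hfF : ∫⁻ x, f x = ∫⁻ p, f' p ∂((volume : Measure ℝ).prod volume) :=
      (lintegral_comp_equiv e.symm (hep.symm e) f).symm
    have hgG : ∫⁻ x, g x = ∫⁻ p, g' p ∂((volume : Measure ℝ).prod volume) :=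
      (lintegral_comp_equiv e.symm (hep.symm e) g).symm
    have hle1 : ∫⁻ p, f' p ∂((volume : Measure ℝ).prod volume) ≤ ∫⁻ x', F x' :=
      lintegral_prod_le_iterated volume volume f'
    have hle2 : ∫⁻ p, g' p ∂((volume : Measure ℝ).prod volume) ≤ ∫⁻ y', G y' :=
      lintegral_prod_le_iterated volume volume g'
    have hHle : upInt volume H ≤ upInt ((volume : Measure ℝ).prod volume) h' :=
      upInt_slice_le volume volume h'
    have hup : upInt ((volume : Measure ℝ).prod volume) h' = upInt volume h := by
      have h1 := upInt_comp_equiv e hep h'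
      have he2 : (fun x => h' (e x)) = h := by
        funext x
        show h (e.symm (e x)) = h x
        rw [e.symm_apply_apply]
      rw [← h1, he2]
    calc (∫⁻ x, f x) ^ (1-t) * (∫⁻ x, g x) ^ t
        ≤ (∫⁻ x', F x') ^ (1-t) * (∫⁻ y', G y') ^ t := by
          rw [hfF, hgG]
          exact mul_le_mul' (ENNReal.rpow_le_rpow hle1 h1t.le)
            (ENNReal.rpow_le_rpow hle2 ht0.le)
      _ ≤ upInt volume H := hmain
      _ ≤ upInt ((volume : Measure ℝ).prod volume) h' := hHle
      _ = upInt volume h := hup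

end PLAux

open PLAux

/-- The Prékopa–Leindler inequality on `ℝⁿ`. -/
theorem prekopa_leindler_euclidean {n : ℕ} (t : ℝ) (ht0 : 0 < t) (ht1 : t < 1)
    (f g h : EuclideanSpace ℝ (Fin n) → ℝ)
    (hf0 : ∀ x, 0 ≤ f x) (hg0 : ∀ x, 0 ≤ g x) (hh0 : ∀ x, 0 ≤ h x)
    (hfi : Integrable f) (hgi : Integrable g) (hhi : Integrable h)
    (hyp : ∀ x y, f x ^ (1 - t) * g y ^ t ≤ h ((1 - t) • x + t • y)) :
    (∫ x, f x) ^ (1 - t) * (∫ x, g x) ^ t ≤ ∫ x, h x := by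
  have h1t : (0:ℝ) < 1 - t := by linarith
  set eE := (MeasurableEquiv.toLp 2 (Fin n → ℝ)).symm with heE
  have hE : MeasurePreserving eE volume volume :=
    EuclideanSpace.volume_preserving_symm_measurableEquiv_toLp (Fin n)
  set φ : (Fin n → ℝ) → ℝ≥0∞ := fun x => ENNReal.ofReal (f (eE.symm x)) with hφ
  set γ : (Fin n → ℝ) → ℝ≥0∞ := fun x => ENNReal.ofReal (g (eE.symm x)) with hγ
  set η : (Fin n → ℝ) → ℝ≥0∞ := fun x => ENNReal.ofReal (h (eE.symm x)) with hη
  have helinE : ∀ (a b : ℝ) (x y : EuclideanSpace ℝ (Fin n)),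
      eE (a • x + b • y) = a • eE x + b • eE y := fun a b x y => rfl
  have hsymmlinE : ∀ (a b : ℝ) (p q : Fin n → ℝ),
      eE.symm (a • p + b • q) = a • eE.symm p + b • eE.symm q := by
    intro a b p q
    apply eE.injective
    rw [helinE, eE.apply_symm_apply, eE.apply_symm_apply, eE.apply_symm_apply]
  have hyp' : ∀ x y, φ x ^ (1 - t) * γ y ^ t ≤ η ((1 - t) • x + t • y) := by
    intro x y
    show ENNReal.ofReal (f (eE.symm x)) ^ (1-t) * ENNReal.ofReal (g (eE.symm y)) ^ t
      ≤ ENNReal.ofReal (h (eE.symm ((1-t) • x + t • y)))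
    rw [hsymmlinE, ENNReal.ofReal_rpow_of_nonneg (hf0 _) h1t.le,
      ENNReal.ofReal_rpow_of_nonneg (hg0 _) ht0.le,
      ← ENNReal.ofReal_mul (Real.rpow_nonneg (hf0 _) _)]
    exact ENNReal.ofReal_le_ofReal (hyp _ _)
  have main := PLpi ht0 ht1 n φ γ η hyp'
  -- upInt η ≤ lintegral η
  have hηae : AEMeasurable η volume := by
    have h1 : AEMeasurable h (volume : Measure (EuclideanSpace ℝ (Fin n))) := hhi.1.aemeasurable
    have h2 : AEMeasurable (fun x : Fin n → ℝ => h (eE.symm x)) volume :=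
      h1.comp_quasiMeasurePreserving (hE.symm eE).quasiMeasurePreserving
    exact ENNReal.measurable_ofReal.comp_aemeasurable h2
  have hup : upInt volume η ≤ ∫⁻ x, η x := upInt_le_lintegral hηae
  -- transfer lintegrals back to EuclideanSpace
  have hφint : ∫⁻ x, φ x = ∫⁻ x, ENNReal.ofReal (f x) ∂volume :=
    lintegral_comp_equiv eE.symm (hE.symm eE) (fun x => ENNReal.ofReal (f x))
  have hγint : ∫⁻ x, γ x = ∫⁻ x, ENNReal.ofReal (g x) ∂volume :=
    lintegral_comp_equiv eE.symm (hE.symm eE) (fun x => ENNReal.ofReal (g x))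
  have hηint : ∫⁻ x, η x = ∫⁻ x, ENNReal.ofReal (h x) ∂volume :=
    lintegral_comp_equiv eE.symm (hE.symm eE) (fun x => ENNReal.ofReal (h x))
  set A := ∫⁻ x, ENNReal.ofReal (f x) ∂(volume : Measure (EuclideanSpace ℝ (Fin n))) with hA
  set B := ∫⁻ x, ENNReal.ofReal (g x) ∂(volume : Measure (EuclideanSpace ℝ (Fin n))) with hB
  set C := ∫⁻ x, ENNReal.ofReal (h x) ∂(volume : Measure (EuclideanSpace ℝ (Fin n))) with hC
  have hchain : A ^ (1-t) * B ^ t ≤ C := by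
    rw [← hφint, ← hγint]
    exact main.trans (hup.trans (le_of_eq hηint))
  -- finiteness
  have hfinite : ∀ (u : EuclideanSpace ℝ (Fin n) → ℝ), (∀ x, 0 ≤ u x) → Integrable u →
      ∫⁻ x, ENNReal.ofReal (u x) ∂volume ≠ ⊤ := by
    intro u hu0 hui
    have := (hasFiniteIntegral_iff_ofReal (Filter.Eventually.of_forall hu0)).mp
      hui.hasFiniteIntegral
    exact this.ne
  have hAfin : A ≠ ⊤ := hfinite f hf0 hfi
  have hBfin : B ≠ ⊤ := hfinite g hg0 hgi
  have hCfin : C ≠ ⊤ := hfinite h hh0 hhi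
  -- convert to real integrals
  rw [integral_eq_lintegral_of_nonneg_ae (Filter.Eventually.of_forall hf0) hfi.1,
    integral_eq_lintegral_of_nonneg_ae (Filter.Eventually.of_forall hg0) hgi.1,
    integral_eq_lintegral_of_nonneg_ae (Filter.Eventually.of_forall hh0) hhi.1]
  rw [ENNReal.toReal_rpow, ENNReal.toReal_rpow, ← ENNReal.toReal_mul]
  exact ENNReal.toReal_mono hCfin hchain
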